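/- Let Z be a real-valued random variable on a probability space, let 𝒢 be a sub-σ-algebra, let F(t) = P(Z ≤ t) be the distribution function of Z, F^v(t) = P(Z ≤ t | 𝒢), and D = ∫_ℝ E[(F(t) − F^v(t))²] dF(t) where dF denotes integration with respect to the law of Z. If F is continuous, then 0 ≤ D ≤ 1/6. -/

import Mathlib

open MeasureTheory ProbabilityTheory Filter

/-- **Sharper bound for the Cramér–von Mises index of a real output with continuous cdf.**
If the distribution function `F` of the real random variable `Z` is continuous, then the
Cramér–von Mises index `D = ∫ E[(F(t) − F^v(t))²] dF(t)` satisfies `0 ≤ D ≤ 1/6`. -/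
theorem cramer_von_mises_index_bounds_continuous
    {Ω : Type*} (G : MeasurableSpace Ω) [m0 : MeasurableSpace Ω]
    (P : Measure Ω) [IsProbabilityMeasure P] (hG : G ≤ m0)
    (Z : Ω → ℝ) (hZ : Measurable Z)
    (F : ℝ → ℝ) (hF : ∀ t, F t = (P {ω | Z ω ≤ t}).toReal) (hFcont : Continuous F)
    (Fv : ℝ → Ω → ℝ)
    (hFv : ∀ t, Fv t
      = MeasureTheory.condExp G P (Set.indicator {ω | Z ω ≤ t} fun _ => (1 : ℝ)))
    (D : ℝ) (hD : D = ∫ t, (∫ ω, (F t - Fv t ω) ^ 2 ∂P) ∂(Measure.map Z P)) :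
    0 ≤ D ∧ D ≤ 1 / 6 := by
  have hZae : AEMeasurable Z P := hZ.aemeasurable
  set μ : Measure ℝ := Measure.map Z P with hμdef
  haveI : IsProbabilityMeasure μ := Measure.isProbabilityMeasure_map hZae
  have hPZ : ∀ t, μ (Set.Iic t) = P {ω | Z ω ≤ t} := fun t => by
    rw [hμdef, Measure.map_apply hZ measurableSet_Iic]; rfl
  have hF' : ∀ t, F t = (μ (Set.Iic t)).toReal := fun t => by rw [hF, hPZ]
  have hF0 : ∀ t, 0 ≤ F t := fun t => by rw [hF]; exact ENNReal.toReal_nonneg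
  have hF1 : ∀ t, F t ≤ 1 := fun t => by
    rw [hF']
    have := ENNReal.toReal_mono (measure_ne_top μ Set.univ)
      (measure_mono (Set.subset_univ (Set.Iic t)))
    simpa using this
  have hFmono : Monotone F := fun a b hab => by
    rw [hF' a, hF' b]
    exact ENNReal.toReal_mono (measure_ne_top _ _)
      (measure_mono (Set.Iic_subset_Iic.2 hab))
  have hFcdf : F = cdf μ := funext fun t => by rw [hF', cdf_eq_real, measureReal_def]
  have hFbot : Tendsto F atBot (nhds 0) := hFcdf ▸ tendsto_cdf_atBot μ
  have hFtop : Tendsto F atTop (nhds 1) := hFcdf ▸ tendsto_cdf_atTop μ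
  -- inner bound : conditional variance bound
  have inner_bound : ∀ t, (∫ ω, (F t - Fv t ω) ^ 2 ∂P) ≤ F t * (1 - F t) := by
    intro t
    have hs : MeasurableSet {ω | Z ω ≤ t} := hZ measurableSet_Iic
    set f : Ω → ℝ := Set.indicator {ω | Z ω ≤ t} (fun _ => (1 : ℝ)) with hfdef
    have hfint : Integrable f P := (integrable_const (1 : ℝ)).indicator hs
    have hf0 : ∀ ω, 0 ≤ f ω := fun ω =>
      Set.indicator_nonneg (fun _ _ => zero_le_one) ω
    have hf1 : ∀ ω, f ω ≤ 1 := fun ω => by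
      by_cases h : ω ∈ {ω | Z ω ≤ t} <;>
        simp [hfdef, Set.indicator_apply, h]
    have h0 : 0 ≤ᵐ[P] Fv t := by
      rw [hFv]; exact condExp_nonneg (ae_of_all _ hf0)
    have h1 : Fv t ≤ᵐ[P] fun _ => (1 : ℝ) := by
      rw [hFv]
      have := condExp_mono (m := G) hfint (integrable_const (1 : ℝ))
        (ae_of_all _ hf1)
      rwa [condExp_const hG] at this
    have hFvint : Integrable (Fv t) P := by rw [hFv]; exact integrable_condExp
    have hFvmeas : AEStronglyMeasurable (Fv t) P := hFvint.1
    have hmean : ∫ ω, Fv t ω ∂P = F t := by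
      rw [hFv, integral_condExp hG, hF]
      have : ∫ ω, f ω ∂P = (P {ω | Z ω ≤ t}).toReal • (1 : ℝ) :=
        integral_indicator_const (1 : ℝ) hs
      simpa using this
    have hsq_int : Integrable (fun ω => (Fv t ω) ^ 2) P := by
      refine (integrable_const (1 : ℝ)).mono' (hFvmeas.pow 2) ?_
      filter_upwards [h0, h1] with ω h0ω h1ω
      simp only [Pi.zero_apply] at h0ω
      rw [Real.norm_eq_abs, abs_of_nonneg (sq_nonneg _)]
      nlinarith
    have hsq_le : (fun ω => (Fv t ω) ^ 2) ≤ᵐ[P] Fv t := by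
      filter_upwards [h0, h1] with ω h0ω h1ω
      simp only [Pi.zero_apply] at h0ω
      nlinarith
    have hexp : ∫ ω, (F t - Fv t ω) ^ 2 ∂P
        = (F t) ^ 2 - 2 * F t * (∫ ω, Fv t ω ∂P) + ∫ ω, (Fv t ω) ^ 2 ∂P := by
      have hrw : (fun ω => (F t - Fv t ω) ^ 2)
          = fun ω => ((F t) ^ 2 - 2 * F t * Fv t ω) + (Fv t ω) ^ 2 := by
        funext ω; ring
      have hint1 : Integrable (fun ω => F t ^ 2 - 2 * F t * Fv t ω) P :=
        (integrable_const _).sub (hFvint.const_mul _)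
      have step1 : ∫ ω, (F t ^ 2 - 2 * F t * Fv t ω + Fv t ω ^ 2) ∂P
          = (∫ ω, (F t ^ 2 - 2 * F t * Fv t ω) ∂P) + ∫ ω, Fv t ω ^ 2 ∂P :=
        integral_add hint1 hsq_int
      have step2 : ∫ ω, (F t ^ 2 - 2 * F t * Fv t ω) ∂P
          = (∫ _ω, (F t ^ 2 : ℝ) ∂P) - ∫ ω, 2 * F t * Fv t ω ∂P :=
        integral_sub (integrable_const _) (hFvint.const_mul _)
      rw [hrw, step1, step2, MeasureTheory.integral_const_mul, integral_const]
      simp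
    rw [hexp, hmean]
    have := integral_mono_ae hsq_int hFvint hsq_le
    rw [hmean] at this
    nlinarith
  -- the pushforward of μ by F is uniform on [0,1]
  have hmap : Measure.map F μ = volume.restrict (Set.Icc (0 : ℝ) 1) := by
    refine Measure.ext_of_Iic _ _ fun y => ?_
    rw [Measure.map_apply hFcont.measurable measurableSet_Iic,
      Measure.restrict_apply measurableSet_Iic]
    rcases lt_or_ge y 0 with hy | hy
    · have h1 : F ⁻¹' Set.Iic y = ∅ := by
        ext t
        simp only [Set.mem_preimage, Set.mem_Iic, Set.mem_empty_iff_false, iff_false, not_le]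
        exact lt_of_lt_of_le hy (hF0 t)
      have h2 : Set.Iic y ∩ Set.Icc (0 : ℝ) 1 = ∅ := by
        ext x
        simp only [Set.mem_inter_iff, Set.mem_Iic, Set.mem_Icc,
          Set.mem_empty_iff_false, iff_false]
        rintro ⟨hx, hx0, -⟩; linarith
      rw [h1, h2]
      simp
    rcases le_or_gt 1 y with hy1 | hy1
    · have h1 : F ⁻¹' Set.Iic y = Set.univ := by
        ext t
        simp only [Set.mem_preimage, Set.mem_Iic, Set.mem_univ, iff_true]
        exact (hF1 t).trans hy1
      have h2 : Set.Iic y ∩ Set.Icc (0 : ℝ) 1 = Set.Icc 0 1 := by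
        ext x
        simp only [Set.mem_inter_iff, Set.mem_Iic, Set.mem_Icc, and_iff_right_iff_imp]
        rintro ⟨hx0, hx1⟩; linarith
      rw [h1, h2, Real.volume_Icc]
      simp
    · -- 0 ≤ y < 1
      set S : Set ℝ := F ⁻¹' Set.Iic y with hSdef
      have h2 : Set.Iic y ∩ Set.Icc (0 : ℝ) 1 = Set.Icc 0 y := by
        ext x
        simp only [Set.mem_inter_iff, Set.mem_Iic, Set.mem_Icc]
        constructor
        · rintro ⟨hx, hx0, -⟩; exact ⟨hx0, hx⟩
        · rintro ⟨hx0, hxy⟩; exact ⟨hxy, hx0, by linarith⟩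
      rw [h2, Real.volume_Icc]
      by_cases hne : S.Nonempty
      · have hbdd : BddAbove S := by
          obtain ⟨a, ha⟩ := (hFtop.eventually (eventually_gt_nhds hy1)).exists_forall_of_atTop
          refine ⟨a, fun s hs => ?_⟩
          by_contra hsa
          have h1 : y < F s := ha s (le_of_not_ge hsa)
          have h2 : F s ≤ y := hs
          linarith
        have hclosed : IsClosed S := isClosed_Iic.preimage hFcont
        set c := sSup S with hcdef
        have hc : c ∈ S := hclosed.csSup_mem hne hbdd
        have hFc_le : F c ≤ y := hc
        have hFc_ge : y ≤ F c := by
          by_contra h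
          push_neg at h
          have hopen : IsOpen {x : ℝ | F x < y} := isOpen_Iio.preimage hFcont
          obtain ⟨ε, hε, hball⟩ := Metric.isOpen_iff.mp hopen c h
          have hmem : c + ε / 2 ∈ S := by
            have hdist : dist (c + ε / 2) c = ε / 2 := by
              rw [Real.dist_eq]
              rw [show c + ε / 2 - c = ε / 2 by ring, abs_of_nonneg (by linarith)]
            have hball2 : c + ε / 2 ∈ Metric.ball c ε := by
              rw [Metric.mem_ball, hdist]; linarith
            show F (c + ε / 2) ≤ y
            exact le_of_lt (hball hball2)
          have := le_csSup hbdd hmem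
          linarith
        have hFc : F c = y := le_antisymm hFc_le hFc_ge
        have hSeq : S = Set.Iic c := by
          apply subset_antisymm
          · exact fun s hs => le_csSup hbdd hs
          · exact fun s hs => le_trans (hFmono hs) hFc_le
        rw [hSeq]
        have : μ (Set.Iic c) = ENNReal.ofReal (F c) := by
          rw [hF', ENNReal.ofReal_toReal (measure_ne_top _ _)]
        rw [this, hFc]
        simp
      · have hSempty : S = ∅ := Set.not_nonempty_iff_eq_empty.mp hne
        have hy0 : y ≤ 0 := by
          by_contra h
          push_neg at h
          obtain ⟨a, ha⟩ := (hFbot.eventually (eventually_lt_nhds h)).exists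
          exact hne ⟨a, le_of_lt ha⟩
        have : y = 0 := le_antisymm hy0 hy
        rw [hSempty, this]
        simp
  -- the key integral computation
  have hgint : Integrable (fun t => F t * (1 - F t)) μ := by
    refine (integrable_const (1 : ℝ)).mono'
      ((hFcont.mul (continuous_const.sub hFcont)).aestronglyMeasurable) ?_
    refine ae_of_all _ fun t => ?_
    have h0 := hF0 t; have h1 := hF1 t
    rw [Real.norm_eq_abs, abs_of_nonneg (by nlinarith)]
    nlinarith
  have key : ∫ t, F t * (1 - F t) ∂μ = 1 / 6 := by
    have hgm : AEStronglyMeasurable (fun y : ℝ => y * (1 - y)) (Measure.map F μ) :=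
      Continuous.aestronglyMeasurable (by fun_prop)
    have hcomp : ∫ y, y * (1 - y) ∂(Measure.map F μ) = ∫ t, F t * (1 - F t) ∂μ :=
      integral_map hFcont.measurable.aemeasurable hgm
    rw [← hcomp, hmap]
    have h1 : ∫ y in Set.Icc (0:ℝ) 1, y * (1 - y) = ∫ y in (0:ℝ)..1, y * (1 - y) := by
      rw [integral_Icc_eq_integral_Ioc, intervalIntegral.integral_of_le (by norm_num)]
    rw [h1]
    have h2 : ∀ y : ℝ, y * (1 - y) = y - y ^ 2 := fun y => by ring
    simp_rw [h2]
    rw [intervalIntegral.integral_sub intervalIntegral.intervalIntegrable_id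
      (intervalIntegral.intervalIntegrable_pow 2), integral_id, integral_pow]
    norm_num
  constructor
  · rw [hD]
    exact integral_nonneg fun t => integral_nonneg fun ω => sq_nonneg _
  · rw [hD]
    calc ∫ t, (∫ ω, (F t - Fv t ω) ^ 2 ∂P) ∂(Measure.map Z P)
        ≤ ∫ t, F t * (1 - F t) ∂μ := by
          refine integral_mono_of_nonneg
            (ae_of_all _ fun t => integral_nonneg fun ω => sq_nonneg _) hgint
            (ae_of_all _ inner_bound)
      _ = 1 / 6 := key
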